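/- Let $B$ be the generic $(r+1)\times(r+1)$ matrix of independent indeterminates with $r \geq 2$. Then $B^t$ is not equivalent to $B$: there do not exist $S, T \in GL(r+1,\mathbb{C})$ with $B^t = S B T$ as matrices of linear forms. -/

import Mathlib

open Matrix

/-- The transpose of the generic `(r+1) × (r+1)` matrix of independent linear forms
(`r ≥ 2`) is not equivalent to it: there are no invertible constant matrices `S, T`
with `Xᵀ = S X T` for all `X`. -/
theorem generic_matrix_transpose_not_equivalent
    (r : ℕ) (hr : 2 ≤ r) :
    ¬ ∃ S T : Matrix (Fin (r + 1)) (Fin (r + 1)) ℂ, IsUnit S ∧ IsUnit T ∧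
      ∀ X : Matrix (Fin (r + 1)) (Fin (r + 1)) ℂ, Xᵀ = S * X * T := by
  rintro ⟨S, T, -, -, h⟩
  have key : ∀ i j k l : Fin (r + 1),
      S k i * T j l = (if i = l ∧ j = k then 1 else 0) := by
    intro i j k l
    have := congrFun (congrFun (h (Matrix.single i j 1)) k) l
    simp [Matrix.mul_apply, Matrix.single, Finset.sum_ite_eq,
      Finset.sum_ite_eq', ite_and, Finset.mul_sum, Finset.sum_mul] at this
    rw [← this]
    simp [ite_and]
  have h01 : (0 : Fin (r + 1)) ≠ 1 := by
    simp [Fin.ext_iff]; omega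
  have h1 := key 0 0 0 0
  have h2 := key 0 0 0 1
  have h3 := key 1 0 0 1
  simp [h01, h01.symm] at h1 h2 h3
  rcases h2 with h2 | h2
  · rw [h2, zero_mul] at h1; exact one_ne_zero h1.symm
  · rw [h2, mul_zero] at h3; exact one_ne_zero h3.symm
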